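/- Let (P, σ, τ) be a perfume, let m := ord_P(σ) and L := 2m, and let 1 ≤ J, K ≤ m. Define the J×L model matrix 𝓗_C = (c_{j,l}) and the K×L model matrix 𝓗_D = (d_{k,l}) over ZMod P by: c_{j,l} := σ^{l−j} for 0 ≤ l < m and c_{j,l} := τ·σ^{l−j} for m ≤ l < L; and d_{k,l} := −τ·σ^{k−l} for 0 ≤ l < m and d_{k,l} := −σ^{k−l} for m ≤ l < L (all powers taken in (ZMod P)^×, with negative exponents meaning powers of σ^{−1}). Then for every row index j of 𝓗_C and every row index k of 𝓗_D, the vector c_j − d_k = (c_{j,0} − d_{k,0}, …, c_{j,L−1} − d_{k,L−1}) in (ZMod P)^L is multiplicity even; consequently the associated QC-LDPC matrices satisfy H_C · H_D^T = 0 over F_2, i.e., the twisted condition (T). -/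

import Mathlib

open Matrix

lemma my_pow_eq_of_modEq {M : Type*} [Monoid M] {s : M} {m : ℕ} (hs : s ^ m = 1)
    {a b : ℕ} (hab : a % m = b % m) : s ^ a = s ^ b := by
  have key : ∀ n : ℕ, s ^ n = s ^ (n % m) := fun n => by
    conv_lhs => rw [← Nat.div_add_mod n m]
    rw [pow_add, pow_mul, hs, one_pow, one_mul]
  rw [key a, key b, hab]

lemma my_invol (m j k l : ℕ) (hm : 0 < m) (hl : l < m) :
    (j + k + m - ((j + k + m - l) % m)) % m = l := by
  have h1 := Nat.mod_lt (j + k + m - l) hm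
  have h2 := Nat.div_add_mod (j + k + m - l) m
  have h3 : j + k + m - ((j + k + m - l) % m) = m * ((j + k + m - l) / m) + l := by omega
  rw [h3, Nat.mul_add_mod, Nat.mod_eq_of_lt hl]

lemma my_hr (m j k l : ℕ) (hl : l < m) :
    (l + ((j + k + m - l) % m)) % m = (j + k) % m := by
  have h2 := Nat.div_add_mod (j + k + m - l) m
  have h3 : l + ((j + k + m - l) % m) + m * ((j + k + m - l) / m) = j + k + m := by omega
  calc (l + ((j + k + m - l) % m)) % m
      = (l + ((j + k + m - l) % m) + m * ((j + k + m - l) / m)) % m := by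
        rw [Nat.add_mul_mod_self_left]
    _ = (j + k + m) % m := by rw [h3]
    _ = (j + k) % m := Nat.add_mod_right _ _

lemma my_key {R : Type*} [CommRing R] (s t : R) {m : ℕ} (hm1 : 1 ≤ m) (hsm : s ^ m = 1)
    (j k l : ℕ) (hl : l < m) :
    t * s ^ (m + (j + k + m - l) % m + (m - 1) * j)
        + s ^ (k + (m - 1) * (m + (j + k + m - l) % m))
      = s ^ (l + (m - 1) * j) + t * s ^ (k + (m - 1) * l) := by
  set r := (j + k + m - l) % m with hrdef
  have hpow : ∀ a b : ℕ, ((a : ZMod m) = (b : ZMod m)) → s ^ a = s ^ b := fun a b hab =>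
    my_pow_eq_of_modEq hsm ((ZMod.natCast_eq_natCast_iff' a b m).mp hab)
  have hrz : ((l : ZMod m) + (r : ZMod m) = (j : ZMod m) + (k : ZMod m)) := by
    have h := (ZMod.natCast_eq_natCast_iff' (l + r) (j + k) m).mpr (my_hr m j k l hl)
    push_cast at h
    exact h
  have e1 : s ^ (m + r + (m - 1) * j) = s ^ (k + (m - 1) * l) := by
    apply hpow
    push_cast [Nat.cast_sub hm1]
    simp only [ZMod.natCast_self]
    linear_combination hrz
  have e2 : s ^ (k + (m - 1) * (m + r)) = s ^ (l + (m - 1) * j) := by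
    apply hpow
    push_cast [Nat.cast_sub hm1]
    simp only [ZMod.natCast_self]
    linear_combination -hrz
  rw [e1, e2]
  ring

lemma my_inner (P : ℕ) [NeZero P] (C D : ZMod P) (p q : Fin P) :
    (∑ r : Fin P, (if ((r : ℕ) : ZMod P) - ((p : ℕ) : ZMod P) = C then (1 : ZMod 2) else 0)
      * (if ((r : ℕ) : ZMod P) - ((q : ℕ) : ZMod P) = D then 1 else 0))
    = if C - D = ((q : ℕ) : ZMod P) - ((p : ℕ) : ZMod P) then 1 else 0 := by
  set r₀ : Fin P := ⟨(((p : ℕ) : ZMod P) + C).val, ZMod.val_lt _⟩ with hr₀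
  have hval₀ : ((r₀ : ℕ) : ZMod P) = ((p : ℕ) : ZMod P) + C :=
    ZMod.natCast_rightInverse _
  have hcast : ∀ r : Fin P, (((r : ℕ) : ZMod P) - ((p : ℕ) : ZMod P) = C) ↔ r = r₀ := by
    intro r
    constructor
    · intro hr
      have h1 : ((r : ℕ) : ZMod P) = ((p : ℕ) : ZMod P) + C := by linear_combination hr
      apply Fin.ext
      show (r : ℕ) = (((p : ℕ) : ZMod P) + C).val
      rw [← h1, ZMod.val_natCast, Nat.mod_eq_of_lt r.isLt]
    · rintro rfl
      linear_combination hval₀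
  simp only [hcast, ite_mul, one_mul, zero_mul]
  rw [Finset.sum_ite_eq' Finset.univ r₀
    (fun r => if ((r : ℕ) : ZMod P) - ((q : ℕ) : ZMod P) = D then (1 : ZMod 2) else 0)]
  simp only [Finset.mem_univ, if_true]
  have hiff : (((r₀ : ℕ) : ZMod P) - ((q : ℕ) : ZMod P) = D) ↔
      (C - D = ((q : ℕ) : ZMod P) - ((p : ℕ) : ZMod P)) := by
    rw [hval₀]
    constructor <;> intro h <;> linear_combination h
  rw [if_congr hiff rfl rfl]


/-- The multiplicative order `ord_P(σ)` of `σ` modulo `P`. -/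
noncomputable def ordP (P σ : ℕ) : ℕ := orderOf ((σ : ZMod P))

/-- `σ` is a fulfillment to `P`. -/
def IsFulfillment (P σ : ℕ) : Prop :=
  Nat.Coprime σ P ∧ ∀ i : ℕ, 1 ≤ i → i < ordP P σ → Nat.Coprime (σ ^ i - 1) P

/-- A triple `(P, σ, τ)` of positive integers is a perfume. -/
def IsPerfume (P σ τ : ℕ) : Prop :=
  0 < P ∧ 0 < σ ∧ 0 < τ ∧ IsFulfillment P σ ∧ Nat.Coprime τ P ∧
    ∀ i : ℕ, 1 ≤ i → i ≤ ordP P σ → (τ : ZMod P) ≠ (σ : ZMod P) ^ i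

/-- The circulant permutation matrix `I(b)` of size `P` over `F₂`. -/
def circPerm (P : ℕ) (b : ZMod P) : Matrix (Fin P) (Fin P) (ZMod 2) :=
  Matrix.of fun j l => if ((l : ℕ) : ZMod P) - ((j : ℕ) : ZMod P) = b then 1 else 0

/-- The QC-LDPC matrix associated with a model matrix over `ZMod P`. -/
def qcMatrix' {P J L : ℕ} (c : Fin J → Fin L → ZMod P) :
    Matrix (Fin J × Fin P) (Fin L × Fin P) (ZMod 2) :=
  Matrix.of fun r s => circPerm P (c r.1 s.1) r.2 s.2

/-- A vector over `ZMod P` is multiplicity even if every element of `ZMod P`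
occurs an even number of times among its entries. -/
def MultEven {P L : ℕ} (v : Fin L → ZMod P) : Prop :=
  ∀ z : ZMod P, Even (Finset.univ.filter (fun l => v l = z)).card

/-- for a perfume `(P, σ, τ)` with `m = ord_P(σ)`, `L = 2m`, and
model matrices `c_{j,l} = σ^{l−j}` (resp. `τ·σ^{l−j}`) for `l < m` (resp.
`m ≤ l < L`) and `d_{k,l} = −τ·σ^{k−l}` (resp. `−σ^{k−l}`) for `l < m` (resp.
`m ≤ l < L`), every cross difference vector `c_j − d_k` is multiplicity even;
consequently the associated QC-LDPC matrices satisfy `H_C · H_Dᵀ = 0`, i.e. the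
twisted condition (T). -/
theorem perfume_twisted (P σ τ : ℕ) (h : IsPerfume P σ τ) (J K : ℕ)
    (hJ : 1 ≤ J) (hJm : J ≤ ordP P σ) (hK : 1 ≤ K) (hKm : K ≤ ordP P σ)
    (c : Fin J → Fin (2 * ordP P σ) → ZMod P)
    (d : Fin K → Fin (2 * ordP P σ) → ZMod P)
    (hc : ∀ j l, c j l =
      if (l : ℕ) < ordP P σ then
        (σ : ZMod P) ^ (l : ℕ) * ((σ : ZMod P)⁻¹) ^ (j : ℕ)
      else
        (τ : ZMod P) * ((σ : ZMod P) ^ (l : ℕ) * ((σ : ZMod P)⁻¹) ^ (j : ℕ)))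
    (hd : ∀ k l, d k l =
      if (l : ℕ) < ordP P σ then
        -((τ : ZMod P) * ((σ : ZMod P) ^ (k : ℕ) * ((σ : ZMod P)⁻¹) ^ (l : ℕ)))
      else
        -((σ : ZMod P) ^ (k : ℕ) * ((σ : ZMod P)⁻¹) ^ (l : ℕ))) :
    (∀ (j : Fin J) (k : Fin K), MultEven (fun l => c j l - d k l)) ∧
      qcMatrix' c * (qcMatrix' d)ᵀ = 0 := by
  classical
  obtain ⟨hP, hσ, hτ, ⟨hcop, -⟩, hτcop, -⟩ := h
  haveI : NeZero P := ⟨hP.ne'⟩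
  revert hc hd
  revert c d
  set m := ordP P σ with hmdef
  intro c d hc hd
  set s : ZMod P := (σ : ZMod P) with hsdef
  set t : ZMod P := (τ : ZMod P) with htdef
  have hm1 : 1 ≤ m := le_trans hJ hJm
  have hsm : s ^ m = 1 := pow_orderOf_eq_one s
  have hsu : s * s⁻¹ = 1 := ZMod.coe_mul_inv_eq_one σ hcop
  have hu : s⁻¹ = s ^ (m - 1) := by
    have hm' : m = (m - 1) + 1 := by omega
    calc s⁻¹ = s⁻¹ * s ^ ((m - 1) + 1) := by rw [← hm', hsm, mul_one]
      _ = s ^ (m - 1) * (s * s⁻¹) := by rw [pow_succ]; ring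
      _ = s ^ (m - 1) := by rw [hsu, mul_one]
  -- the multiplicity-even part
  have even_part : ∀ (j : Fin J) (k : Fin K), MultEven (fun l => c j l - d k l) := by
    intro j k
    set v : Fin (2 * m) → ZMod P := fun l => c j l - d k l with hvdef
    have hval : ∀ l : Fin (2 * m), v l =
        if (l : ℕ) < m then
          s ^ ((l : ℕ) + (m - 1) * (j : ℕ)) + t * s ^ ((k : ℕ) + (m - 1) * (l : ℕ))
        else
          t * s ^ ((l : ℕ) + (m - 1) * (j : ℕ)) + s ^ ((k : ℕ) + (m - 1) * (l : ℕ)) := by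
      intro l
      simp only [hvdef, hc, hd, hu]
      split_ifs with hl <;> ring
    set e : Fin (2 * m) → Fin (2 * m) := fun l =>
      if (l : ℕ) < m then
        ⟨m + ((j : ℕ) + (k : ℕ) + m - (l : ℕ)) % m, by
          have := Nat.mod_lt ((j : ℕ) + (k : ℕ) + m - (l : ℕ)) (by omega : 0 < m); omega⟩
      else
        ⟨((j : ℕ) + (k : ℕ) + m - ((l : ℕ) - m)) % m, by
          have := Nat.mod_lt ((j : ℕ) + (k : ℕ) + m - ((l : ℕ) - m)) (by omega : 0 < m)
          omega⟩ with hedef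
    have hel_lo : ∀ l : Fin (2 * m), (l : ℕ) < m →
        ((e l : Fin (2 * m)) : ℕ) = m + ((j : ℕ) + (k : ℕ) + m - (l : ℕ)) % m := by
      intro l hl; simp only [hedef, if_pos hl]
    have hel_hi : ∀ l : Fin (2 * m), ¬ (l : ℕ) < m →
        ((e l : Fin (2 * m)) : ℕ) = ((j : ℕ) + (k : ℕ) + m - ((l : ℕ) - m)) % m := by
      intro l hl; simp only [hedef, if_neg hl]
    have he_side : ∀ l : Fin (2 * m), ((e l : Fin (2 * m)) : ℕ) < m ↔ ¬ (l : ℕ) < m := by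
      intro l
      by_cases hl : (l : ℕ) < m
      · rw [hel_lo l hl]
        exact iff_of_false (by omega) (not_not_intro hl)
      · rw [hel_hi l hl]
        have := Nat.mod_lt ((j : ℕ) + (k : ℕ) + m - ((l : ℕ) - m)) (by omega : 0 < m)
        exact iff_of_true this hl
    have he_val : ∀ l : Fin (2 * m), v (e l) = v l := by
      intro l
      by_cases hl : (l : ℕ) < m
      · have hel := hel_lo l hl
        rw [hval l, hval (e l), if_pos hl, if_neg (by rw [hel]; omega), hel]
        exact my_key s t hm1 hsm (j : ℕ) (k : ℕ) (l : ℕ) hl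
      · have hel := hel_hi l hl
        have hl2 : (l : ℕ) - m < m := by omega
        have helm : ((e l : Fin (2 * m)) : ℕ) < m := (he_side l).mpr hl
        rw [hval l, hval (e l), if_neg hl, if_pos helm]
        have h4 := my_key s t hm1 hsm (j : ℕ) (k : ℕ) ((e l : Fin (2 * m)) : ℕ) helm
        have h5 : ((j : ℕ) + (k : ℕ) + m - ((e l : Fin (2 * m)) : ℕ)) % m = (l : ℕ) - m := by
          rw [hel]; exact my_invol m (j : ℕ) (k : ℕ) ((l : ℕ) - m) (by omega) hl2
        rw [h5] at h4
        have h6 : m + ((l : ℕ) - m) = (l : ℕ) := by omega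
        rw [h6] at h4
        exact h4.symm
    have he_inv : ∀ l : Fin (2 * m), e (e l) = l := by
      intro l
      by_cases hl : (l : ℕ) < m
      · have hel := hel_lo l hl
        have hne : ¬ ((e l : Fin (2 * m)) : ℕ) < m := by rw [hel]; omega
        apply Fin.ext
        rw [hel_hi (e l) hne, hel]
        have heq : m + ((j : ℕ) + (k : ℕ) + m - (l : ℕ)) % m - m
            = ((j : ℕ) + (k : ℕ) + m - (l : ℕ)) % m := by omega
        rw [heq]
        exact my_invol m (j : ℕ) (k : ℕ) (l : ℕ) (by omega) hl
      · have hel := hel_hi l hl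
        have helm : ((e l : Fin (2 * m)) : ℕ) < m := (he_side l).mpr hl
        apply Fin.ext
        rw [hel_lo (e l) helm, hel]
        have heq := my_invol m (j : ℕ) (k : ℕ) ((l : ℕ) - m) (by omega) (by omega)
        rw [heq]
        omega
    intro z
    have hsplit := Finset.card_filter_add_card_filter_not
      (s := Finset.univ.filter (fun l => v l = z)) (p := fun l : Fin (2 * m) => (l : ℕ) < m)
    have hbij : ((Finset.univ.filter (fun l => v l = z)).filter
          (fun l : Fin (2 * m) => (l : ℕ) < m)).card
        = ((Finset.univ.filter (fun l => v l = z)).filter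
          (fun l : Fin (2 * m) => ¬ (l : ℕ) < m)).card := by
      apply Finset.card_nbij' e e
      · intro a ha
        simp only [Finset.mem_coe, Finset.mem_filter, Finset.mem_univ, true_and] at ha ⊢
        exact ⟨by rw [he_val a]; exact ha.1, fun hlt => ((he_side a).mp hlt) ha.2⟩
      · intro a ha
        simp only [Finset.mem_coe, Finset.mem_filter, Finset.mem_univ, true_and] at ha ⊢
        exact ⟨by rw [he_val a]; exact ha.1, (he_side a).mpr ha.2⟩
      · intro a _; exact he_inv a
      · intro a _; exact he_inv a
    rw [← hsplit, hbij]
    exact ⟨_, rfl⟩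
  refine ⟨even_part, ?_⟩
  ext ⟨j, p⟩ ⟨k, q⟩
  rw [Matrix.mul_apply]
  simp only [Matrix.transpose_apply, qcMatrix', circPerm, Matrix.of_apply, Matrix.zero_apply]
  rw [Fintype.sum_prod_type]
  rw [Finset.sum_congr rfl (fun l _ => my_inner P (c j l) (d k l) p q)]
  rw [Finset.sum_boole]
  obtain ⟨n, hn⟩ := even_part j k (((q : ℕ) : ZMod P) - ((p : ℕ) : ZMod P))
  have hcard : (Finset.univ.filter
      (fun l => c j l - d k l = ((q : ℕ) : ZMod P) - ((p : ℕ) : ZMod P))).card = n + n := hn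
  rw [hcard]
  exact_mod_cast (ZMod.natCast_eq_zero_iff (n + n) 2).mpr ⟨n, by ring⟩
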